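/- With Δ(S) as in the excess reduction (δ(0) = "()", δ(1) = "((", Δ(S) = "(" · δ(S) · ")"^{k+1}, k = 2·rank₁(S,n)): for each 1 ≤ i ≤ n, letting p = 2i (the position of the first character of δ(S[i]) in Δ(S)), the maximum of excess over positions {p, p+1} is attained at position p iff S[i] = 0, and the minimum over {p, p+1} is attained at position p iff S[i] = 1. Hence access to S reduces to range-maximum/minimum-position queries on the excess sequence of Δ(S). -/

import Mathlib

/-- δ(0) = "()", δ(1) = "((". A parenthesis is `true` iff it is '('. -/
def δp (b : Bool) : List Bool := if b then [true, true] else [true, false]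

/-- Δ(S) = "(" · δ(S[1])···δ(S[n]) · ")"^{k+1}, where k = 2·rank₁(S,n). -/
def ΔEx (S : List Bool) : List Bool :=
  true :: (S.flatMap δp ++ List.replicate (2 * S.count true + 1) false)

/-- Open minus closed parentheses among the first `j` characters. -/
def excess (T : List Bool) (j : ℕ) : ℤ :=
  ((T.take j).count true : ℤ) - ((T.take j).count false : ℤ)

lemma excess_succ (T : List Bool) (j : ℕ) (b : Bool) (hb : T[j]? = some b) :
    excess T (j + 1) = excess T j + (if b then 1 else -1) := by
  unfold excess
  rw [List.take_succ, hb]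
  cases b <;> simp [List.count_append] <;> ring

lemma flatMap_get (S : List Bool) (m : ℕ) (hm : m < S.length) :
    (S.flatMap δp)[2 * m + 1]? = some (S.getD m false) := by
  induction S generalizing m with
  | nil => simp at hm
  | cons a t ih =>
    cases m with
    | zero => cases a <;> simp [δp]
    | succ m =>
      have h := ih m (by simpa using hm)
      have e : 2 * (m + 1) + 1 = (2 * m + 1) + 2 := by ring
      rw [e]
      cases a <;> simpa [δp] using h

/-- For 1 ≤ i ≤ n, with p = 2i the position of the first character of δ(S[i]) in Δ(S):
the maximum of excess over positions {p, p+1} is attained at p iff S[i] = 0, and the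
minimum is attained at p iff S[i] = 1. -/
theorem stmt16 (S : List Bool) (i : ℕ) (h1 : 1 ≤ i) (h2 : i ≤ S.length) :
    (max (excess (ΔEx S) (2 * i)) (excess (ΔEx S) (2 * i + 1)) = excess (ΔEx S) (2 * i)
        ↔ S.getD (i - 1) false = false) ∧
    (min (excess (ΔEx S) (2 * i)) (excess (ΔEx S) (2 * i + 1)) = excess (ΔEx S) (2 * i)
        ↔ S.getD (i - 1) false = true) := by
  have hm : i - 1 < S.length := by omega
  have hlen : 2 * (i - 1) + 1 < (S.flatMap δp).length := by
    rw [List.length_flatMap]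
    have : ∀ T : List Bool, (T.map (List.length ∘ δp)).sum = 2 * T.length := by
      intro T; induction T with
      | nil => simp
      | cons a t ih => cases a <;> simp [δp, ih] <;> omega
    rw [show (fun a => (δp a).length) = List.length ∘ δp from rfl, this]; omega
  have hg : (ΔEx S)[2 * i]? = some (S.getD (i - 1) false) := by
    have e : 2 * i = (2 * (i - 1) + 1) + 1 := by omega
    rw [e]
    simp only [ΔEx, List.getElem?_cons_succ]
    show (S.flatMap δp ++ List.replicate (2 * S.count true + 1) false)[2 * (i - 1) + 1]? = _
    rw [List.getElem?_append, if_pos hlen]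
    exact flatMap_get S (i - 1) hm
  have := excess_succ (ΔEx S) (2 * i) _ hg
  cases hb : S.getD (i - 1) false <;> rw [hb] at this <;> simp at this <;>
    constructor <;> simp <;> omega
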